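/- Let K be a field of characteristic different from 2 and let a, b be nonzero elements of K. Then the quaternion algebra ℍ[K,a,b] is isomorphic as a K-algebra to the algebra of 2×2 matrices over K if and only if the quadratic form x² − a·y² − b·z² in three variables has a nontrivial zero over K (i.e., there exist x, y, z ∈ K, not all zero, with x² − a·y² − b·z² = 0). -/

import Mathlib

open Quaternion Module

section Aux
variable {K : Type*} [Field K] {a b : K}

private def qn (a b : K) (q : ℍ[K,a,b]) : K :=
  q.re ^ 2 - a * q.imI ^ 2 - b * q.imJ ^ 2 + a * b * q.imK ^ 2

private lemma qn_mul (p q : ℍ[K,a,b]) : qn a b (p * q) = qn a b p * qn a b q := by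
  simp only [qn, QuaternionAlgebra.re_mul, QuaternionAlgebra.imI_mul,
    QuaternionAlgebra.imJ_mul, QuaternionAlgebra.imK_mul]
  ring

private lemma ternary_of_quaternary (ha : a ≠ 0) (hb : b ≠ 0)
    (t x y z : K) (h : t ^ 2 - a * x ^ 2 - b * y ^ 2 + a * b * z ^ 2 = 0)
    (hnz : ¬ (t = 0 ∧ x = 0 ∧ y = 0 ∧ z = 0)) :
    ∃ X Y Z : K, ¬ (X = 0 ∧ Y = 0 ∧ Z = 0) ∧ X ^ 2 - a * Y ^ 2 - b * Z ^ 2 = 0 := by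
  by_cases hd : y ^ 2 - a * z ^ 2 = 0
  · have ht : t ^ 2 - a * x ^ 2 = 0 := by linear_combination h + b * hd
    by_cases hz : z = 0
    · subst hz
      have hy : y = 0 := by
        have : y ^ 2 = 0 := by linear_combination hd
        exact pow_eq_zero_iff (by norm_num) |>.mp this
      subst hy
      by_cases hx : x = 0
      · subst hx
        have htt : t = 0 := by
          have : t ^ 2 = 0 := by linear_combination ht
          exact pow_eq_zero_iff (by norm_num) |>.mp this
        exact absurd ⟨htt, rfl, rfl, rfl⟩ hnz
      · refine ⟨t / x, 1, 0, by simp, ?_⟩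
        field_simp
        linear_combination ht
    · refine ⟨y / z, 1, 0, by simp, ?_⟩
      field_simp
      linear_combination hd
  · refine ⟨(t * y - a * x * z) / (y ^ 2 - a * z ^ 2),
      (x * y - t * z) / (y ^ 2 - a * z ^ 2), 1, by simp, ?_⟩
    field_simp
    linear_combination (y ^ 2 - a * z ^ 2) * h

private lemma repr_of_ternary (h2 : (2 : K) ≠ 0) (ha : a ≠ 0) (hb : b ≠ 0)
    (x y z : K) (hnz : ¬ (x = 0 ∧ y = 0 ∧ z = 0)) (h : x ^ 2 - a * y ^ 2 - b * z ^ 2 = 0) :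
    ∃ u v : K, u ^ 2 - b * v ^ 2 = a := by
  by_cases hy : y = 0
  · subst hy
    have hz : z ≠ 0 := by
      rintro rfl
      have hx : x = 0 := by
        have : x ^ 2 = 0 := by linear_combination h
        exact pow_eq_zero_iff (by norm_num) |>.mp this
      exact hnz ⟨hx, rfl, rfl⟩
    have ht : (x / z) ^ 2 = b := by
      field_simp
      linear_combination h
    have htz : x / z ≠ 0 := by
      intro h0
      exact hb (by rw [← ht, h0]; ring)
    obtain ⟨t, ht0, ht⟩ : ∃ t : K, t ≠ 0 ∧ t ^ 2 = b := ⟨x / z, htz, ht⟩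
    refine ⟨(a + 1) / 2, (a - 1) / (2 * t), ?_⟩
    field_simp
    linear_combination (a - 1) ^ 2 * ht
  · exact ⟨x / y, z / y, by field_simp; linear_combination h⟩

/-- An explicit quaternionic basis of the `2×2` matrix algebra, given a representation
`a = u² - b v²`. -/
@[simps i j k]
noncomputable def quatBasis (u v : K) (huv : u ^ 2 - b * v ^ 2 = a) :
    QuaternionAlgebra.Basis (Matrix (Fin 2) (Fin 2) K) a 0 b where
  i := !![u, v; -(v * b), -u]
  j := !![0, 1; b, 0]
  k := !![v * b, u; -(u * b), -(v * b)]
  i_mul_i := by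
    subst huv
    ext i j
    fin_cases i <;> fin_cases j <;>
      simp [Matrix.mul_apply, Fin.sum_univ_two, Matrix.one_apply] <;> ring
  j_mul_j := by
    ext i j
    fin_cases i <;> fin_cases j <;>
      simp [Matrix.mul_apply, Fin.sum_univ_two, Matrix.one_apply]
  i_mul_j := by
    ext i j
    fin_cases i <;> fin_cases j <;>
      simp [Matrix.mul_apply, Fin.sum_univ_two] <;> ring
  j_mul_i := by
    ext i j
    fin_cases i <;> fin_cases j <;>
      simp [Matrix.mul_apply, Fin.sum_univ_two] <;> ring

theorem quatBasis_i (u v : K) (huv : u ^ 2 - b * v ^ 2 = a) :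
    (quatBasis u v huv).i = !![u, v; -(v * b), -u] := rfl

theorem quatBasis_j (u v : K) (huv : u ^ 2 - b * v ^ 2 = a) :
    (quatBasis u v huv).j = !![0, 1; b, 0] := rfl

theorem quatBasis_k (u v : K) (huv : u ^ 2 - b * v ^ 2 = a) :
    (quatBasis u v huv).k = !![v * b, u; -(u * b), -(v * b)] := rfl

private noncomputable def quatIso (h2 : (2 : K) ≠ 0) (ha : a ≠ 0) (hb : b ≠ 0)
    (u v : K) (huv : u ^ 2 - b * v ^ 2 = a) :
    ℍ[K,a,b] ≃ₐ[K] Matrix (Fin 2) (Fin 2) K := by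
  let q := quatBasis u v huv
  let F := q.liftHom
  have hFdef : ∀ x : ℍ[K,a,b], F x =
      algebraMap K _ x.re + x.imI • q.i + x.imJ • q.j + x.imK • q.k := fun _ => rfl
  have hinj : Function.Injective F := by
    rw [injective_iff_map_eq_zero]
    intro x hx
    rw [hFdef] at hx
    have h00 := congrFun (congrFun hx 0) 0
    have h01 := congrFun (congrFun hx 0) 1
    have h10 := congrFun (congrFun hx 1) 0
    have h11 := congrFun (congrFun hx 1) 1
    simp only [quatBasis_i, quatBasis_j, quatBasis_k, q, Matrix.add_apply, Matrix.smul_apply,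
      Matrix.algebraMap_matrix_apply, Matrix.cons_val', Matrix.cons_val_zero, Matrix.cons_val_one,
      Matrix.head_cons, Matrix.head_fin_const, Matrix.empty_val', Matrix.cons_val_fin_one,
      Matrix.of_apply, smul_eq_mul, Matrix.zero_apply, if_true, if_false, ne_eq, zero_ne_one,
      one_ne_zero, not_false_eq_true, Fin.isValue, ite_true, ite_false, reduceIte,
      Algebra.algebraMap_self_apply] at h00 h01 h10 h11
    have hre : x.re = 0 := by
      have : 2 * x.re = 0 := by linear_combination h00 + h11
      exact (mul_eq_zero.mp this).resolve_left h2
    have hJ : x.imJ = 0 := by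
      have : 2 * b * x.imJ = 0 := by linear_combination b * h01 + h10
      rcases mul_eq_zero.mp this with h' | h'
      · exact absurd h' (mul_ne_zero h2 hb)
      · exact h'
    have hK : x.imK = 0 := by
      have : a * x.imK = 0 := by
        linear_combination u * h01 - v * h00 - u * hJ + v * hre - x.imK * huv
      exact (mul_eq_zero.mp this).resolve_left ha
    have hI : x.imI = 0 := by
      by_cases hu : u = 0
      · have hv : v ≠ 0 := by
          rintro rfl
          exact ha (by rw [← huv, hu]; ring)
        have : v * x.imI = 0 := by linear_combination h01 - hJ - u * hK
        exact (mul_eq_zero.mp this).resolve_left hv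
      · have : u * x.imI = 0 := by linear_combination h00 - hre - v * b * hK
        exact (mul_eq_zero.mp this).resolve_left hu
    ext <;> simp [hre, hI, hJ, hK]
  have hsurj : Function.Surjective F := by
    have hfin : finrank K ℍ[K,a,b] = finrank K (Matrix (Fin 2) (Fin 2) K) := by
      rw [QuaternionAlgebra.finrank_eq_four, Module.finrank_matrix]
      simp
    exact (LinearMap.injective_iff_surjective_of_finrank_eq_finrank
      (f := F.toLinearMap) hfin).mp hinj
  exact AlgEquiv.ofBijective F ⟨hinj, hsurj⟩

end Aux

/-- For a field `K` of characteristic ≠ 2 and nonzero `a b : K`, the quaternion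
algebra `ℍ[K,a,b]` is isomorphic to the 2×2 matrix algebra over `K` iff the quadratic form
`x² − a y² − b z²` has a nontrivial zero over `K`. -/
theorem quaternionAlgebra_iso_matrix_iff_ternary_form_has_nontrivial_zero
    (K : Type*) [Field K] (hchar : ringChar K ≠ 2) (a b : K) (ha : a ≠ 0) (hb : b ≠ 0) :
    Nonempty (ℍ[K, a, b] ≃ₐ[K] Matrix (Fin 2) (Fin 2) K) ↔
      ∃ x y z : K, ¬ (x = 0 ∧ y = 0 ∧ z = 0) ∧ x ^ 2 - a * y ^ 2 - b * z ^ 2 = 0 := by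
  have h2 : (2 : K) ≠ 0 := Ring.two_ne_zero hchar
  constructor
  · rintro ⟨e⟩
    set A := Matrix.single (0 : Fin 2) (0 : Fin 2) (1 : K) with hAdef
    set B := Matrix.single (1 : Fin 2) (1 : Fin 2) (1 : K) with hBdef
    have hA : A ≠ 0 := by
      intro h
      have := congrFun (congrFun h 0) 0
      simp [hAdef, Matrix.single_apply_same] at this
    have hB : B ≠ 0 := by
      intro h
      have := congrFun (congrFun h 1) 1
      simp [hBdef, Matrix.single_apply_same] at this
    have hAB : A * B = 0 := by
      rw [hAdef, hBdef]
      apply Matrix.single_mul_single_of_ne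
      decide
    set p := e.symm A with hpdef
    set q := e.symm B with hqdef
    have hp : p ≠ 0 := by
      intro h
      apply hA
      have := congrArg e h
      simpa [hpdef] using this
    have hq : q ≠ 0 := by
      intro h
      apply hB
      have := congrArg e h
      simpa [hqdef] using this
    have hpq : p * q = 0 := by
      rw [hpdef, hqdef, ← map_mul, hAB, map_zero]
    have h0 : qn a b p * qn a b q = 0 := by
      rw [← qn_mul, hpq]
      simp [qn]
    rcases mul_eq_zero.mp h0 with h' | h'
    · refine ternary_of_quaternary ha hb p.re p.imI p.imJ p.imK h' ?_
      rintro ⟨h1, h2, h3, h4⟩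
      exact hp (by ext <;> simp [h1, h2, h3, h4])
    · refine ternary_of_quaternary ha hb q.re q.imI q.imJ q.imK h' ?_
      rintro ⟨h1, h2, h3, h4⟩
      exact hq (by ext <;> simp [h1, h2, h3, h4])
  · rintro ⟨x, y, z, hnz, hzero⟩
    obtain ⟨u, v, huv⟩ := repr_of_ternary h2 ha hb x y z hnz hzero
    exact ⟨quatIso h2 ha hb u v huv⟩
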